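/- Let k be a field of characteristic 3, let c ∈ k with c ≠ 0, let b₂ = c (a nonzero constant, i.e. b₂, viewed as a degree-≤2 polynomial, has a double root at infinity), let b₄ = φ₄t⁴ + φ₃t³ + φ₂t² + φ₁t + φ₀ ∈ k[t], and let b₆ ∈ k[t] with deg b₆ ≤ 6. Then there exists Q ∈ k[t] with deg Q ≤ 6 such that Δ = −b₂²(b₂b₆ − b₄²) + b₄³ = φ₄³t¹² + φ₃³t⁹ + c²φ₄²t⁸ − c²φ₄φ₃t⁷ + Q. In particular the coefficients of t¹¹ and t¹⁰ in Δ vanish; and if Δ is monic of degree 12 then φ₄ = 1 and Δ = t¹² + l t⁹ + m t⁸ − n t⁷ + Q with l = φ₃³, m = c² ≠ 0, n = c²φ₃, which satisfy n³ = l m³. -/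
import Mathlib

open Polynomial

theorem stmt2 {k : Type*} [Field k] [CharP k 3]
    (c : k) (hc : c ≠ 0) (φ₄ φ₃ φ₂ φ₁ φ₀ : k)
    (b₆ : k[X]) (hb₆ : b₆.degree ≤ 6)
    (b₂ b₄ Δ : k[X])
    (hb₂ : b₂ = C c)
    (hb₄ : b₄ = C φ₄ * X ^ 4 + C φ₃ * X ^ 3 + C φ₂ * X ^ 2 + C φ₁ * X + C φ₀)
    (hΔ : Δ = -b₂ ^ 2 * (b₂ * b₆ - b₄ ^ 2) + b₄ ^ 3) :
    ∃ Q : k[X], Q.degree ≤ 6 ∧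
      Δ = C (φ₄ ^ 3) * X ^ 12 + C (φ₃ ^ 3) * X ^ 9 + C (c ^ 2 * φ₄ ^ 2) * X ^ 8
          - C (c ^ 2 * φ₄ * φ₃) * X ^ 7 + Q ∧
      Δ.coeff 11 = 0 ∧ Δ.coeff 10 = 0 ∧
      (Δ.Monic → Δ.degree = 12 →
        φ₄ = 1 ∧
        Δ = X ^ 12 + C (φ₃ ^ 3) * X ^ 9 + C (c ^ 2) * X ^ 8 - C (c ^ 2 * φ₃) * X ^ 7 + Q ∧
        c ^ 2 ≠ 0 ∧ (c ^ 2 * φ₃) ^ 3 = φ₃ ^ 3 * (c ^ 2) ^ 3) := by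
  have h3 : (3 : k[X]) = 0 := by
    have : ((3 : ℕ) : k[X]) = 0 := CharP.cast_eq_zero k[X] 3
    simpa using this
  have hcube : b₄ ^ 3 = (C φ₄ * X ^ 4) ^ 3 + (C φ₃ * X ^ 3) ^ 3
      + (C φ₂ * X ^ 2 + C φ₁ * X + C φ₀) ^ 3 := by
    rw [hb₄, show C φ₄ * X ^ 4 + C φ₃ * X ^ 3 + C φ₂ * X ^ 2 + C φ₁ * X + C φ₀
      = (C φ₄ * X ^ 4 + C φ₃ * X ^ 3) + (C φ₂ * X ^ 2 + C φ₁ * X + C φ₀) by ring,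
      add_pow_char, add_pow_char]
  set Q : k[X] := -(C c ^ 3) * b₆ + C c ^ 2 * ((C φ₃) ^ 2 * X ^ 6
      + (C φ₂ * X ^ 2 + C φ₁ * X + C φ₀) ^ 2
      + 2 * (C φ₄ * X ^ 4) * (C φ₂ * X ^ 2 + C φ₁ * X + C φ₀)
      + 2 * (C φ₃ * X ^ 3) * (C φ₂ * X ^ 2 + C φ₁ * X + C φ₀))
      + (C φ₂ * X ^ 2 + C φ₁ * X + C φ₀) ^ 3 with hQ
  have hQle : Q.degree ≤ 6 := by
    rw [hQ]
    refine (degree_add_le _ _).trans (sup_le ((degree_add_le _ _).trans (sup_le ?_ ?_)) ?_)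
    · rw [neg_mul, degree_neg, ← map_pow]
      exact (degree_mul_le _ _).trans
        (le_trans (add_le_add degree_C_le hb₆) (by norm_num))
    · compute_degree
    · compute_degree
  have hQeq : Δ = C (φ₄ ^ 3) * X ^ 12 + C (φ₃ ^ 3) * X ^ 9 + C (c ^ 2 * φ₄ ^ 2) * X ^ 8
      - C (c ^ 2 * φ₄ * φ₃) * X ^ 7 + Q := by
    rw [hΔ, hb₂, hcube, hb₄, hQ]
    simp only [map_mul, map_pow]
    linear_combination (C φ₄ * C φ₃ * (C c) ^ 2 * X ^ 7) * h3
  have hco : ∀ n : ℕ, 6 < n → Q.coeff n = 0 := fun n hn =>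
    coeff_eq_zero_of_degree_lt (hQle.trans_lt (by exact_mod_cast WithBot.coe_lt_coe.2 hn))
  refine ⟨Q, hQle, hQeq, ?_, ?_, ?_⟩
  · rw [hQeq]
    simp only [coeff_add, coeff_sub, coeff_C_mul, coeff_X_pow]
    norm_num [hco 11 (by norm_num)]
  · rw [hQeq]
    simp only [coeff_add, coeff_sub, coeff_C_mul, coeff_X_pow]
    norm_num [hco 10 (by norm_num)]
  · intro hm hd
    have hnd : Δ.natDegree = 12 := natDegree_eq_of_degree_eq_some hd
    have h12 : Δ.coeff 12 = 1 := by
      have := hm.coeff_natDegree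
      rwa [hnd] at this
    have hφ : φ₄ ^ 3 = 1 := by
      rw [hQeq] at h12
      simp only [coeff_add, coeff_sub, coeff_C_mul, coeff_X_pow] at h12
      rw [hco 12 (by norm_num)] at h12
      norm_num at h12
      exact h12
    have hφ4 : φ₄ = 1 := by
      have : frobenius k 3 φ₄ = frobenius k 3 1 := by
        simp [frobenius_def, hφ]
      exact frobenius_inj k 3 this
    refine ⟨hφ4, ?_, pow_ne_zero 2 hc, by ring⟩
    rw [hQeq, hφ4]
    simp
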